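/- Let (X, 𝒳, μ, T) be a measure preserving system, let λ ∈ ℂ with |λ| = 1, let f ∈ L^∞(μ) with f(Tx) = λf(x) a.e., and let F ∈ L^∞(μ) satisfy F(Tx) = f(x)F(x) a.e. Then for every n ∈ ℕ, F(Tⁿx) = λ^{n(n-1)/2} f(x)ⁿ F(x) a.e., and consequently F(x) = F(Tⁿx)³ · F(T²ⁿx)⁻³ · F(T³ⁿx) a.e. (assuming |F| = 1 a.e.). -/

import Mathlib

open MeasureTheory

/-- If `f` is an eigenfunction of modulus one with eigenvalue `λ` and `F`
satisfies `F∘T = f·F` with `|F| = 1` a.e., then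
`F(Tⁿx) = λ^{n(n-1)/2} f(x)ⁿ F(x)` a.e., and consequently
`F(x) = F(Tⁿx)³ F(T²ⁿx)⁻³ F(T³ⁿx)` a.e. -/
theorem generalized_eigenfunction_iterate
    {X : Type*} [MeasurableSpace X] (μ : Measure X) [IsProbabilityMeasure μ]
    (T : X → X) (hT : MeasurePreserving T μ μ)
    (l : ℂ) (hl : ‖l‖ = 1)
    (f F : X → ℂ) (hfm : Measurable f) (hFm : Measurable F)
    (hfmod : ∀ᵐ x ∂μ, ‖f x‖ = 1)
    (hFmod : ∀ᵐ x ∂μ, ‖F x‖ = 1)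
    (hf : ∀ᵐ x ∂μ, f (T x) = l * f x)
    (hF : ∀ᵐ x ∂μ, F (T x) = f x * F x) :
    ∀ n : ℕ,
      (∀ᵐ x ∂μ, F (T^[n] x) = l ^ (n * (n - 1) / 2) * (f x) ^ n * F x) ∧
      (∀ᵐ x ∂μ, F x =
        (F (T^[n] x)) ^ 3 * ((F (T^[2 * n] x))⁻¹) ^ 3 * F (T^[3 * n] x)) := by
  have pull : ∀ {p : X → Prop}, (∀ᵐ x ∂μ, p x) → ∀ᵐ x ∂μ, p (T x) :=
    fun h => hT.quasiMeasurePreserving.ae h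
  have key : ∀ n : ℕ, ∀ᵐ x ∂μ, F (T^[n] x) = l ^ (n * (n - 1) / 2) * (f x) ^ n * F x := by
    intro n
    induction n with
    | zero => filter_upwards with x; simp
    | succ n ih =>
      filter_upwards [pull ih, hf, hF] with x h1 h2 h3
      have hexp : (n + 1) * ((n + 1) - 1) / 2 = n * (n - 1) / 2 + n := by
        have hab : (n + 1) * ((n + 1) - 1) = n * (n - 1) + 2 * n := by
          cases n with
          | zero => rfl
          | succ k => simp [Nat.succ_sub_one]; ring
        omega
      rw [Function.iterate_succ_apply, h1, h2, h3, hexp]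
      ring
  intro n
  refine ⟨key n, ?_⟩
  filter_upwards [key n, key (2 * n), key (3 * n), hfmod, hFmod] with x h1 h2 h3 hfx hFx
  have hl0 : l ≠ 0 := by intro h; simp [h] at hl
  have hf0 : f x ≠ 0 := by intro h; simp [h] at hfx
  have hF0 : F x ≠ 0 := by intro h; simp [h] at hFx
  have ha2 : 2 ∣ n * (n - 1) := by
    cases n with
    | zero => simp
    | succ k =>
      simpa [Nat.succ_sub_one, mul_comm] using (Nat.even_mul_succ_self k).two_dvd
  have hb : 2 * n * (2 * n - 1) = 4 * (n * (n - 1)) + 2 * n := by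
    cases n with
    | zero => rfl
    | succ k =>
      have h2 : 2 * (k + 1) - 1 = 2 * k + 1 := by omega
      rw [h2, Nat.succ_sub_one]; ring
  have hc : 3 * n * (3 * n - 1) = 9 * (n * (n - 1)) + 6 * n := by
    cases n with
    | zero => rfl
    | succ k =>
      have h3 : 3 * (k + 1) - 1 = 3 * k + 2 := by omega
      rw [h3, Nat.succ_sub_one]; ring
  have hexp : 3 * (2 * n * (2 * n - 1) / 2) = 3 * (n * (n - 1) / 2) + 3 * n * (3 * n - 1) / 2 := by
    omega
  rw [h1, h2, h3]
  rw [eq_comm, inv_pow, ← div_eq_mul_inv, div_mul_eq_mul_div,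
    div_eq_iff (pow_ne_zero _ (by simp [hl0, hf0, hF0])), eq_comm]
  calc F x * (l ^ (2 * n * (2 * n - 1) / 2) * f x ^ (2 * n) * F x) ^ 3
      = l ^ (3 * (2 * n * (2 * n - 1) / 2)) * f x ^ (6 * n) * F x ^ 4 := by ring
    _ = l ^ (3 * (n * (n - 1) / 2) + 3 * n * (3 * n - 1) / 2) * f x ^ (6 * n) * F x ^ 4 := by
        rw [hexp]
    _ = (l ^ (n * (n - 1) / 2) * f x ^ n * F x) ^ 3
          * (l ^ (3 * n * (3 * n - 1) / 2) * f x ^ (3 * n) * F x) := by ring
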